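/- Every continuous character of a compact Hausdorff totally disconnected abelian topological group (i.e., every continuous homomorphism from such a group to the circle group ℝ/ℤ) has finite image, and hence is a torsion element of the Pontryagin dual group. -/

import Mathlib

/-- The circle has no small subgroups: any additive subgroup contained in the ball of
radius `1/4` around `0` is trivial. -/
lemma aux_no_small_subgroups (S : AddSubgroup (AddCircle (1 : ℝ)))
    (h : ∀ x ∈ S, ‖x‖ < 1/4) : ∀ x ∈ S, x = 0 := by
  intro x hx
  by_contra hne
  obtain ⟨s, rfl⟩ := QuotientAddGroup.mk_surjective x
  set t : ℝ := s - round s with ht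
  have h0r : (((round s : ℝ)) : AddCircle (1 : ℝ)) = 0 := by
    rw [AddCircle.coe_eq_zero_iff]
    exact ⟨round s, by simp⟩
  have hts : ((t : ℝ) : AddCircle (1 : ℝ)) = (s : AddCircle (1 : ℝ)) := by
    rw [ht]
    calc ((s - (round s : ℝ) : ℝ) : AddCircle (1 : ℝ))
        = (s : AddCircle (1 : ℝ)) - (((round s : ℝ)) : AddCircle (1 : ℝ)) := by norm_cast
      _ = (s : AddCircle (1 : ℝ)) := by rw [h0r, sub_zero]
  have hnorm : ‖(s : AddCircle (1 : ℝ))‖ = |t| := by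
    rw [AddCircle.norm_eq]; simp [ht]
  set r : ℝ := |t| with hr
  have hrpos : 0 < r := by
    rw [← hnorm]
    exact norm_pos_iff.mpr hne
  have hrlt : r < 1/4 := by
    rw [← hnorm]; exact h _ hx
  -- find smallest `n` with `1/4 < n * r`
  have hex : ∃ n : ℕ, 1/4 < (n : ℝ) * r := by
    obtain ⟨n, hn⟩ := exists_nat_gt ((1/4) / r)
    exact ⟨n, by rwa [div_lt_iff₀ hrpos] at hn⟩
  classical
  set n := Nat.find hex with hn
  have hnr : 1/4 < (n : ℝ) * r := Nat.find_spec hex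
  have hnpos : n ≠ 0 := by
    intro h0
    rw [h0] at hnr; simp at hnr; linarith
  have hpred : ¬ (1/4 < ((n - 1 : ℕ) : ℝ) * r) :=
    Nat.find_min hex (Nat.sub_lt (Nat.pos_of_ne_zero hnpos) one_pos)
  push_neg at hpred
  have hle : (n : ℝ) * r < 1/2 := by
    have : ((n - 1 : ℕ) : ℝ) = (n : ℝ) - 1 := by
      rw [Nat.cast_sub (Nat.one_le_iff_ne_zero.mpr hnpos)]; simp
    rw [this] at hpred
    nlinarith
  -- the norm of `n • x` is `n * r > 1/4`, contradiction
  have hsmul : (n • (s : AddCircle (1 : ℝ))) = (((n : ℝ) * t : ℝ) : AddCircle (1 : ℝ)) := by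
    rw [← hts, ← AddCircle.coe_nsmul]
    norm_num
  have habs : |(n : ℝ) * t| = (n : ℝ) * r := by
    rw [abs_mul, hr, Nat.abs_cast]
  have hnormn : ‖n • (s : AddCircle (1 : ℝ))‖ = (n : ℝ) * r := by
    rw [hsmul, ← habs]
    rw [AddCircle.norm_coe_eq_abs_iff (p := (1:ℝ)) (by norm_num)]
    rw [habs]
    simp only [abs_one]
    linarith
  have := h _ (S.nsmul_mem hx n)
  rw [hnormn] at this
  linarith

/-- Every continuous character of a compact Hausdorff totally disconnected abelian
topological group (i.e. every continuous homomorphism to the circle group `ℝ/ℤ`)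
has finite image, and hence is a torsion element of the Pontryagin dual group. -/
theorem continuous_character_of_profinite_is_torsion
    {G : Type*} [AddCommGroup G] [TopologicalSpace G] [IsTopologicalAddGroup G]
    [CompactSpace G] [T2Space G] [TotallyDisconnectedSpace G]
    (χ : ContinuousAddMonoidHom G (AddCircle (1 : ℝ))) :
    (Set.range χ).Finite ∧ ∃ n : ℕ, 0 < n ∧ n • χ = 0 := by
  -- the small neighborhood of 0 in the circle
  set U : Set (AddCircle (1 : ℝ)) := {y | ‖y‖ < 1/4} with hU
  have hUopen : IsOpen U := isOpen_lt continuous_norm continuous_const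
  have hVopen : IsOpen (χ ⁻¹' U) := hUopen.preimage χ.continuous
  have h0V : (0 : G) ∈ χ ⁻¹' U := by
    simp only [Set.mem_preimage, hU, Set.mem_setOf_eq, map_zero, norm_zero]
    norm_num
  obtain ⟨W, hWclopen, h0W, hWV⟩ := compact_exists_isClopen_in_isOpen hVopen h0V
  obtain ⟨H, hHW⟩ :=
    IsTopologicalAddGroup.exist_openAddSubgroup_sub_clopen_nhds_of_zero hWclopen h0W
  -- χ vanishes on H
  have hker : ∀ g ∈ H.toAddSubgroup, χ g = 0 := by
    intro g hg
    refine aux_no_small_subgroups (AddSubgroup.map χ.toAddMonoidHom H.toAddSubgroup) ?_ _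
      (AddSubgroup.mem_map_of_mem _ hg)
    rintro x ⟨a, ha, rfl⟩
    exact hWV (hHW ha)
  -- finiteness of the range, via the finite quotient G ⧸ H
  haveI : Finite (G ⧸ H.toAddSubgroup) := H.quotient_finite_of_isOpen H.isOpen
  have hfin : (Set.range χ).Finite := by
    have : Set.range χ =
        Set.range (QuotientAddGroup.lift H.toAddSubgroup χ.toAddMonoidHom hker) := by
      ext y
      constructor
      · rintro ⟨g, rfl⟩
        exact ⟨QuotientAddGroup.mk g, rfl⟩
      · rintro ⟨q, rfl⟩
        obtain ⟨g, rfl⟩ := QuotientAddGroup.mk_surjective q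
        exact ⟨g, rfl⟩
    rw [this]
    exact Set.finite_range _
  refine ⟨hfin, ?_⟩
  -- torsion: use the cardinality of the (finite) range subgroup
  set R : AddSubgroup (AddCircle (1 : ℝ)) := χ.toAddMonoidHom.range with hR
  haveI : Finite R := by
    have : (R : Set (AddCircle (1 : ℝ))) = Set.range χ := by
      ext y; simp [hR, AddMonoidHom.mem_range]
    have h' : (Set.range ⇑χ).Finite := hfin
    rw [← this] at h'
    exact h'.to_subtype
  refine ⟨Nat.card R, Nat.card_pos, ?_⟩
  have hsmul_apply : ∀ (n : ℕ) (g : G), (n • χ) g = n • (χ g) := by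
    intro n g
    induction n with
    | zero => simp
    | succ k ih =>
      rw [succ_nsmul, succ_nsmul]
      have : (k • χ + χ) g = (k • χ) g + χ g := rfl
      rw [this, ih]
  ext g
  show (Nat.card R • χ) g = (0 : ContinuousAddMonoidHom G (AddCircle (1 : ℝ))) g
  rw [hsmul_apply]
  have hy : χ g ∈ R := ⟨g, rfl⟩
  have h0 : (0 : ContinuousAddMonoidHom G (AddCircle (1 : ℝ))) g = 0 := rfl
  rw [h0]
  have h3 := card_nsmul_eq_zero' (G := ↥R) (x := (⟨χ g, hy⟩ : R))
  calc Nat.card ↥R • χ g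
      = ((Nat.card ↥R • (⟨χ g, hy⟩ : R) : R) : AddCircle (1 : ℝ)) := by norm_cast
    _ = ((0 : R) : AddCircle (1 : ℝ)) := by rw [h3]
    _ = 0 := rfl
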